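/- arXiv:2109.07114 — 2 statements merged into one kernel-verified Lean document; each statement's English description precedes it below -/
import Mathlib

section
/- Let 1 < α < 2 and λ ≥ λ₁ > 0, t > 0, and suppose |F(t,λ)| ≤ c/(1+λt^α) and |F̄(t,λ)| ≤ ct/(1+λt^α) (bounds satisfied by E_{α,1}(−λt^α) and tE_{α,2}(−λt^α)), and that the regularized inverse multiplier satisfies the bound M(λ) ≤ cλ/(1+γλ). Then for any p, q with 0 ≤ p ≤ q ≤ 2+p, λ^{p/2} · (c/(1+λt^α)) · (cλ/(1+γλ)) · λ^{-q/2} ≤ c' min(γ^{-(1+(p−q)/2)}, t^{-α(1+(p−q)/2)}). -/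
lemma rpow_le_one_add' (y e : ℝ) (hy : 0 ≤ y) (he0 : 0 ≤ e) (he1 : e ≤ 1) :
    y ^ e ≤ 1 + y := by
  rcases le_total y 1 with h | h
  · have := Real.rpow_le_one hy h he0
    linarith
  · calc y ^ e ≤ y ^ (1:ℝ) := Real.rpow_le_rpow_of_exponent_le h he1
    _ = y := Real.rpow_one y
    _ ≤ 1 + y := by linarith

/-- Pointwise-in-`λ` estimate at the heart of Lemma 3.5: combining the Mittag-Leffler decay
`1/(1+λt^α)` with the regularized-inverse growth `λ/(1+γλ)` yields, after shifting by
`λ^{(p−q)/2}`, the bound `c' min(γ^{-(1+(p−q)/2)}, t^{-α(1+(p−q)/2)})`, uniformly in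
`λ ≥ λ₁ > 0`, `γ > 0`, `t ∈ (0,T]`, `0 ≤ p ≤ q ≤ 2+p`. -/
theorem regularized_operator_multiplier_bound
    (α lam₁ T c : ℝ) (hα1 : 1 < α) (hα2 : α < 2) (hlam₁ : 0 < lam₁) (hT : 0 < T)
    (hc : 0 < c) :
    ∃ c' : ℝ, 0 < c' ∧ ∀ p q γ t lam : ℝ, 0 ≤ p → p ≤ q → q ≤ 2 + p → 0 < γ →
      0 < t → t ≤ T → lam₁ ≤ lam →
      lam ^ (p / 2) * (c / (1 + lam * t ^ α)) * (c * lam / (1 + γ * lam)) * lam ^ (-(q / 2)) ≤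
        c' * min (γ ^ (-(1 + (p - q) / 2))) (t ^ (-(α * (1 + (p - q) / 2)))) := by
  refine ⟨c * c, mul_pos hc hc, ?_⟩
  intro p q γ t lam hp hpq hq hγ ht htT hlam
  have hlam0 : 0 < lam := lt_of_lt_of_le hlam₁ hlam
  have htα : 0 < t ^ α := Real.rpow_pos_of_pos ht α
  have hD1 : 0 < 1 + lam * t ^ α := by positivity
  have hD2 : 0 < 1 + γ * lam := by positivity
  set θ : ℝ := 1 + (p - q) / 2 with hθ
  have hθ0 : 0 ≤ θ := by rw [hθ]; linarith
  have hθ1 : θ ≤ 1 := by rw [hθ]; linarith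
  have hsplit : lam ^ (p / 2) * lam ^ (-(q / 2)) * lam = lam ^ θ := by
    have h1 : lam ^ θ = lam ^ (p / 2 + -(q / 2)) * lam ^ (1 : ℝ) := by
      rw [← Real.rpow_add hlam0]; congr 1; rw [hθ]; ring
    rw [← Real.rpow_add hlam0, h1, Real.rpow_one]
  have hLHS : lam ^ (p / 2) * (c / (1 + lam * t ^ α)) * (c * lam / (1 + γ * lam)) * lam ^ (-(q / 2))
      = c * c * (lam ^ θ / ((1 + lam * t ^ α) * (1 + γ * lam))) := by
    rw [← hsplit]; field_simp
  rw [hLHS]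
  have key : ∀ X : ℝ, 0 < X → 1 + lam * X ≤ (1 + lam * t ^ α) * (1 + γ * lam) →
      lam ^ θ / ((1 + lam * t ^ α) * (1 + γ * lam)) ≤ X ^ (-θ) := by
    intro X hX hle
    rw [div_le_iff₀ (by positivity)]
    have h1 : (lam * X) ^ θ ≤ 1 + lam * X :=
      rpow_le_one_add' _ _ (by positivity) hθ0 hθ1
    rw [Real.mul_rpow hlam0.le hX.le] at h1
    have hXθ : 0 < X ^ θ := Real.rpow_pos_of_pos hX θ
    have : lam ^ θ * X ^ θ ≤ (1 + lam * t ^ α) * (1 + γ * lam) := le_trans h1 hle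
    calc lam ^ θ = (lam ^ θ * X ^ θ) * X ^ (-θ) := by
            rw [mul_assoc, ← Real.rpow_add hX]; simp
      _ ≤ ((1 + lam * t ^ α) * (1 + γ * lam)) * X ^ (-θ) := by
            apply mul_le_mul_of_nonneg_right this (Real.rpow_nonneg hX.le _)
      _ = X ^ (-θ) * ((1 + lam * t ^ α) * (1 + γ * lam)) := by ring
  have bγ : lam ^ θ / ((1 + lam * t ^ α) * (1 + γ * lam)) ≤ γ ^ (-θ) := by
    apply key γ hγ
    nlinarith [mul_pos hlam0 htα, mul_pos hγ hlam0, mul_pos (mul_pos hlam0 htα) (mul_pos hγ hlam0)]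
  have bt : lam ^ θ / ((1 + lam * t ^ α) * (1 + γ * lam)) ≤ t ^ (-(α * θ)) := by
    have : lam ^ θ / ((1 + lam * t ^ α) * (1 + γ * lam)) ≤ (t ^ α) ^ (-θ) := by
      apply key (t ^ α) htα
      nlinarith [mul_pos hlam0 htα, mul_pos hγ hlam0, mul_pos (mul_pos hlam0 htα) (mul_pos hγ hlam0)]
    rwa [show -(α * θ) = α * (-θ) by ring, Real.rpow_mul ht.le]
  have hmin : lam ^ θ / ((1 + lam * t ^ α) * (1 + γ * lam)) ≤
      min (γ ^ (-θ)) (t ^ (-(α * θ))) := le_min bγ bt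
  calc c * c * (lam ^ θ / ((1 + lam * t ^ α) * (1 + γ * lam)))
      ≤ c * c * min (γ ^ (-θ)) (t ^ (-(α * θ))) :=
        mul_le_mul_of_nonneg_left hmin (by positivity)
    _ = c * c * min (γ ^ (-(1 + (p - q) / 2))) (t ^ (-(α * (1 + (p - q) / 2)))) := by rw [hθ]
end

section
/- For α ∈ (1,2) and constants c, θ with cos θ < 0, the contour tail integral satisfies: for all n ≥ 1 and t_n = nτ, ∫_{π/(τ sinθ)}^∞ e^{ρ cosθ · t_n} ρ^{α−2} dρ ≤ C t_n^{1−α} n^{-1}, where C depends only on α and θ. -/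
open Real MeasureTheory

lemma gamma_integrable_aux {s b : ℝ} (hs : -1 < s) (hb : 0 < b) :
    IntegrableOn (fun x : ℝ => x ^ s * Real.exp (-(b * x))) (Set.Ioi 0) := by
  have h := integrableOn_rpow_mul_exp_neg_mul_rpow (p := 1) hs one_pos hb
  refine h.congr_fun (fun x hx => ?_) measurableSet_Ioi
  simp only [Real.rpow_one, neg_mul]

/-- Contour tail estimate: for `α ∈ (1,2)` and an angle `θ` with `cos θ < 0 < sin θ`,
there is `C > 0` (depending only on `α, θ`) such that for all `τ > 0`, `n ≥ 1`, with
`t_n = nτ`: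
`∫_{π/(τ sinθ)}^∞ e^{ρ cosθ · t_n} ρ^{α−2} dρ ≤ C t_n^{1−α} n⁻¹`. -/
theorem contour_tail_estimate (α θ : ℝ) (hα1 : 1 < α) (hα2 : α < 2)
    (hcos : Real.cos θ < 0) (hsin : 0 < Real.sin θ) :
    ∃ C : ℝ, 0 < C ∧ ∀ τ : ℝ, 0 < τ → ∀ n : ℕ, 1 ≤ n →
      (∫ ρ in Set.Ioi (π / (τ * Real.sin θ)),
          Real.exp (ρ * Real.cos θ * (n * τ)) * ρ ^ (α - 2)) ≤
        C * ((n : ℝ) * τ) ^ (1 - α) * (n : ℝ)⁻¹ := by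
  have hπ : (0:ℝ) < π := Real.pi_pos
  refine ⟨Real.Gamma α * Real.sin θ * (-Real.cos θ) ^ (-α) / π,
    div_pos (mul_pos (mul_pos (Real.Gamma_pos_of_pos (by linarith)) hsin)
      (Real.rpow_pos_of_pos (by linarith) _)) hπ,
    fun τ hτ n hn => ?_⟩
  have hn0 : (0:ℝ) < (n:ℝ) := by exact_mod_cast Nat.lt_of_lt_of_le Nat.zero_lt_one hn
  set a : ℝ := π / (τ * Real.sin θ) with ha_def
  have ha : 0 < a := div_pos hπ (mul_pos hτ hsin)
  set lam : ℝ := -Real.cos θ * ((n:ℝ) * τ) with hlam_def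
  have hlam : 0 < lam := mul_pos (by linarith) (mul_pos hn0 hτ)
  set g : ℝ → ℝ := fun ρ => ρ ^ (α - 1) * Real.exp (-(lam * ρ)) with hg_def
  have hgint : IntegrableOn g (Set.Ioi 0) := gamma_integrable_aux (by linarith) hlam
  have hgint' : IntegrableOn g (Set.Ioi a) := hgint.mono_set (Set.Ioi_subset_Ioi ha.le)
  have hgnonneg : 0 ≤ᵐ[volume.restrict (Set.Ioi (0:ℝ))] g := by
    filter_upwards [ae_restrict_mem measurableSet_Ioi] with ρ (hρ : (0:ℝ) < ρ)
    have := hρ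
    positivity
  -- pointwise bound on Ioi a
  have hpt : ∀ ρ ∈ Set.Ioi a,
      Real.exp (ρ * Real.cos θ * ((n:ℝ) * τ)) * ρ ^ (α - 2) ≤ a⁻¹ * g ρ := by
    intro ρ hρ
    have hρa : a < ρ := hρ
    have hρ0 : 0 < ρ := lt_trans ha hρa
    have hexp : Real.exp (ρ * Real.cos θ * ((n:ℝ) * τ)) = Real.exp (-(lam * ρ)) := by
      congr 1; rw [hlam_def]; ring
    have hsplit : ρ ^ (α - 2) = ρ ^ (α - 1) * ρ⁻¹ := by
      rw [← Real.rpow_neg_one ρ, ← Real.rpow_add hρ0]; congr 1; ring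
    rw [hexp, hg_def, hsplit]
    have hinv : ρ⁻¹ ≤ a⁻¹ := (inv_anti₀ ha hρa.le)
    have h1 : ρ ^ (α - 1) * ρ⁻¹ ≤ ρ ^ (α - 1) * a⁻¹ :=
      mul_le_mul_of_nonneg_left hinv (Real.rpow_nonneg hρ0.le _)
    calc Real.exp (-(lam * ρ)) * (ρ ^ (α - 1) * ρ⁻¹)
        ≤ Real.exp (-(lam * ρ)) * (ρ ^ (α - 1) * a⁻¹) :=
          mul_le_mul_of_nonneg_left h1 (Real.exp_pos _).le
      _ = a⁻¹ * (ρ ^ (α - 1) * Real.exp (-(lam * ρ))) := by ring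
  -- integrability of lhs
  have hfmeas : AEStronglyMeasurable
      (fun ρ : ℝ => Real.exp (ρ * Real.cos θ * ((n:ℝ) * τ)) * ρ ^ (α - 2))
      (volume.restrict (Set.Ioi a)) := by
    apply Measurable.aestronglyMeasurable
    fun_prop
  have hfint : IntegrableOn
      (fun ρ : ℝ => Real.exp (ρ * Real.cos θ * ((n:ℝ) * τ)) * ρ ^ (α - 2))
      (Set.Ioi a) := by
    refine Integrable.mono' (hgint'.const_mul a⁻¹) hfmeas ?_
    filter_upwards [ae_restrict_mem measurableSet_Ioi] with ρ hρ
    have hρ0 : 0 < ρ := lt_trans ha hρ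
    rw [Real.norm_eq_abs, abs_of_nonneg (by positivity)]
    exact hpt ρ hρ
  have step1 : (∫ ρ in Set.Ioi a, Real.exp (ρ * Real.cos θ * ((n:ℝ) * τ)) * ρ ^ (α - 2))
      ≤ ∫ ρ in Set.Ioi a, a⁻¹ * g ρ :=
    setIntegral_mono_on hfint (hgint'.const_mul a⁻¹) measurableSet_Ioi hpt
  have step2 : (∫ ρ in Set.Ioi a, a⁻¹ * g ρ) ≤ a⁻¹ * ∫ ρ in Set.Ioi 0, g ρ := by
    rw [integral_const_mul]
    refine mul_le_mul_of_nonneg_left ?_ (inv_nonneg.mpr ha.le)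
    exact setIntegral_mono_set hgint hgnonneg
      (Filter.Eventually.of_forall (Set.Ioi_subset_Ioi ha.le))
  have hgamma : (∫ ρ in Set.Ioi 0, g ρ) = (1 / lam) ^ α * Real.Gamma α := by
    have := Real.integral_rpow_mul_exp_neg_mul_Ioi (a := α) (r := lam) (by linarith) hlam
    simpa [hg_def] using this
  -- final algebra
  have key : a⁻¹ * ((1 / lam) ^ α * Real.Gamma α)
      = Real.Gamma α * Real.sin θ * (-Real.cos θ) ^ (-α) / π * ((n:ℝ) * τ) ^ (1 - α)
        * (n:ℝ)⁻¹ := by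
    have hnt : (0:ℝ) < (n:ℝ) * τ := mul_pos hn0 hτ
    have hainv : a⁻¹ = τ * Real.sin θ / π := by
      rw [ha_def, inv_div]
    have h1 : (1 / lam) ^ α = (-Real.cos θ) ^ (-α) * ((n:ℝ) * τ) ^ (-α) := by
      rw [one_div, Real.inv_rpow hlam.le, ← Real.rpow_neg hlam.le, hlam_def,
        Real.mul_rpow (by linarith) hnt.le]
    have h2 : ((n:ℝ) * τ) ^ (1 - α) = ((n:ℝ) * τ) * ((n:ℝ) * τ) ^ (-α) := by
      rw [show (1 - α) = 1 + (-α) by ring, Real.rpow_add hnt, Real.rpow_one]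
    rw [hainv, h1, h2]
    field_simp
    done
  calc (∫ ρ in Set.Ioi a, Real.exp (ρ * Real.cos θ * ((n:ℝ) * τ)) * ρ ^ (α - 2))
      ≤ a⁻¹ * ∫ ρ in Set.Ioi 0, g ρ := le_trans step1 step2
    _ = _ := by rw [hgamma, key]
end
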